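/- Let Φ : [0,∞) → ℝ be a bounded, nonincreasing, nonnegative function with ∫_ℝ Φ(|x|) dx < ∞, and let φ ∈ L²(ℝ, ℂ) satisfy |φ(x)| ≤ Φ(|x|) for almost every x ∈ ℝ. Define h_k = √2 ∫_ℝ φ(u) · conj(φ(2u − k)) du, λ_k = (−1)^{1−k} · conj(h_{1−k}), and suppose ψ ∈ L²(ℝ, ℂ) satisfies ψ(x) = √2 Σ_{k∈ℤ} λ_k φ(2x − k) with convergence of the series in L²(ℝ). Then for almost every x ∈ ℝ, |ψ(x)| ≤ 3 (∫_ℝ Φ(|u|) du) (D₁ + D₂) · Φ(|2x − 1|/4), where D₁ = 2(Φ(0) + ∫_0^∞ Φ(v) dv) and D₂ = Φ(0) + 6 ∫_0^∞ Φ(v) dv. -/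

import Mathlib

open MeasureTheory Filter

lemma wavelet_sum_sep (Φ : ℝ → ℝ)
    (hΦanti : AntitoneOn Φ (Set.Ici (0 : ℝ)))
    (hΦnonneg : ∀ x ∈ Set.Ici (0 : ℝ), 0 ≤ Φ x)
    (hΦI : IntegrableOn Φ (Set.Ioi (0 : ℝ)))
    (T : Finset ℝ) (δ : ℝ) (hδ : 0 < δ)
    (hlb : ∀ v ∈ T, δ ≤ v)
    (hsep : ∀ v ∈ T, ∀ w ∈ T, v ≠ w → δ ≤ |v - w|) :
    ∑ v ∈ T, Φ v ≤ δ⁻¹ * ∫ v in Set.Ioi (0 : ℝ), Φ v := by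
  have hsub : ∀ v ∈ T, Set.Ioc (v - δ) v ⊆ Set.Ioi (0 : ℝ) := by
    intro v hv x hx
    have h1 := hlb v hv
    have : (0:ℝ) ≤ v - δ := by linarith
    exact lt_of_le_of_lt this hx.1
  have key : ∀ v ∈ T, δ * Φ v ≤ ∫ x in Set.Ioc (v - δ) v, Φ x := by
    intro v hv
    have h1 := hlb v hv
    have hint : IntegrableOn Φ (Set.Ioc (v - δ) v) := hΦI.mono_set (hsub v hv)
    have hmono : ∀ x ∈ Set.Ioc (v - δ) v, Φ v ≤ Φ x := by
      intro x hx
      have hx0 : (0:ℝ) ≤ x := le_of_lt (hsub v hv hx)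
      exact hΦanti hx0 (by linarith [hx.2] : (0:ℝ) ≤ v) hx.2
    have hc : ∫ _x in Set.Ioc (v - δ) v, Φ v ≤ ∫ x in Set.Ioc (v - δ) v, Φ x :=
      setIntegral_mono_on (integrableOn_const (by
        rw [Real.volume_Ioc]; exact ENNReal.ofReal_ne_top)) hint measurableSet_Ioc hmono
    have hce : ∫ _x in Set.Ioc (v - δ) v, Φ v = δ * Φ v := by
      rw [setIntegral_const, measureReal_def, Real.volume_Ioc, ENNReal.toReal_ofReal (by linarith)]
      rw [smul_eq_mul]; ring_nf
    linarith [hc, hce.symm.le]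
  have hdisj : Set.Pairwise (↑T : Set ℝ) (Function.onFun Disjoint
      (fun v => Set.Ioc (v - δ) v)) := by
    intro v hv w hw hvw
    have hs := hsep v (by simpa using hv) w (by simpa using hw) hvw
    apply Set.Ioc_disjoint_Ioc.2
    rcases le_total v w with hle | hle
    · have h1 : δ ≤ w - v := by
        rwa [abs_sub_comm, abs_of_nonneg (by linarith)] at hs
      exact le_trans (min_le_left _ _) (le_trans (by linarith) (le_max_right _ _))
    · have h1 : δ ≤ v - w := by
        rwa [abs_of_nonneg (by linarith)] at hs
      exact le_trans (min_le_right _ _) (le_trans (by linarith) (le_max_left _ _))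
  have hints : ∀ v ∈ T, IntegrableOn Φ (Set.Ioc (v - δ) v) :=
    fun v hv => hΦI.mono_set (hsub v hv)
  have hU : ∑ v ∈ T, ∫ x in Set.Ioc (v - δ) v, Φ x
      = ∫ x in ⋃ v ∈ T, Set.Ioc (v - δ) v, Φ x :=
    (integral_biUnion_finset T (fun v _ => measurableSet_Ioc) hdisj hints).symm
  have hle2 : ∫ x in ⋃ v ∈ T, Set.Ioc (v - δ) v, Φ x ≤ ∫ x in Set.Ioi (0:ℝ), Φ x := by
    apply setIntegral_mono_set hΦI
    · exact (ae_restrict_iff' measurableSet_Ioi).2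
       (Eventually.of_forall fun x hx => hΦnonneg x (Set.mem_Ici.mpr (le_of_lt (Set.mem_Ioi.mp hx))))
    · exact HasSubset.Subset.eventuallyLE (Set.iUnion₂_subset hsub)
  have hsum : δ * ∑ v ∈ T, Φ v ≤ ∫ x in Set.Ioi (0:ℝ), Φ x := by
    rw [Finset.mul_sum]
    calc ∑ v ∈ T, δ * Φ v ≤ ∑ v ∈ T, ∫ x in Set.Ioc (v - δ) v, Φ x :=
          Finset.sum_le_sum key
      _ = _ := hU
      _ ≤ _ := hle2
  calc ∑ v ∈ T, Φ v = δ⁻¹ * (δ * ∑ v ∈ T, Φ v) := by field_simp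
    _ ≤ δ⁻¹ * ∫ x in Set.Ioi (0:ℝ), Φ x :=
        mul_le_mul_of_nonneg_left hsum (inv_nonneg.2 hδ.le)

lemma wavelet_sum_third (Φ : ℝ → ℝ)
    (hΦanti : AntitoneOn Φ (Set.Ici (0 : ℝ)))
    (hΦnonneg : ∀ x ∈ Set.Ici (0 : ℝ), 0 ≤ Φ x)
    (hΦI : IntegrableOn Φ (Set.Ioi (0 : ℝ)))
    (s : Finset ℤ) :
    ∑ j ∈ s, Φ (|(j : ℝ)| / 3) ≤ Φ 0 + 6 * ∫ v in Set.Ioi (0 : ℝ), Φ v := by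
  classical
  have hterm : ∀ j : ℤ, 0 ≤ Φ (|(j : ℝ)| / 3) :=
    fun j => hΦnonneg _ (Set.mem_Ici.mpr (by positivity))
  rw [← Finset.sum_filter_add_sum_filter_not s (fun j => j = 0)]
  have h0 : ∑ j ∈ s.filter (fun j => j = 0), Φ (|(j : ℝ)| / 3) ≤ Φ 0 := by
    have hsub : s.filter (fun j => j = 0) ⊆ ({0} : Finset ℤ) := by
      intro j hj; simp at hj ⊢; exact hj.2
    calc ∑ j ∈ s.filter (fun j => j = 0), Φ (|(j : ℝ)| / 3)
        ≤ ∑ j ∈ ({0} : Finset ℤ), Φ (|(j : ℝ)| / 3) :=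
          Finset.sum_le_sum_of_subset_of_nonneg hsub (fun j _ _ => hterm j)
      _ = Φ 0 := by simp
  have hside : ∀ (t : Finset ℤ), (∀ j ∈ t, j ≠ 0) → (∀ j ∈ t, ∀ k ∈ t, 0 < j * k) →
      ∑ j ∈ t, Φ (|(j : ℝ)| / 3) ≤ 3 * ∫ v in Set.Ioi (0 : ℝ), Φ v := by
    intro t ht hsign
    have hinj : ∀ a ∈ t, ∀ b ∈ t, |(a : ℝ)| / 3 = |(b : ℝ)| / 3 → a = b := by
      intro a ha b hb hab
      have h1 : |(a : ℝ)| = |(b : ℝ)| := by linarith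
      have h2 : a = b ∨ a = -b := by
        rcases abs_eq_abs.1 h1 with hc | hc
        · left; exact_mod_cast hc
        · right; exact_mod_cast hc
      rcases h2 with hc | hc
      · exact hc
      · exfalso
        have := hsign a ha b hb
        rw [hc] at this
        nlinarith [mul_self_nonneg b]
    have hkey := wavelet_sum_sep Φ hΦanti hΦnonneg hΦI
      (t.image (fun j : ℤ => |(j : ℝ)| / 3)) 3⁻¹ (by norm_num)
      (by
        intro v hv
        simp only [Finset.mem_image] at hv
        obtain ⟨j, hj, rfl⟩ := hv
        have hj0 : j ≠ 0 := ht j hj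
        have h1 : (1 : ℤ) ≤ |j| := Int.one_le_abs hj0
        have : (1 : ℝ) ≤ |(j : ℝ)| := by
          calc (1:ℝ) ≤ ((|j| : ℤ) : ℝ) := by exact_mod_cast h1
            _ = |(j : ℝ)| := by push_cast; ring
        linarith)
      (by
        intro v hv w hw hvw
        simp only [Finset.mem_image] at hv hw
        obtain ⟨j, hj, rfl⟩ := hv
        obtain ⟨k, hk, rfl⟩ := hw
        have hjk : j ≠ k := fun hh => hvw (by rw [hh])
        have hsame : 0 < j * k := hsign j hj k hk
        have h1 : |j| ≠ |k| := by
          intro hh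
          rcases abs_eq_abs.1 hh with hc | hc
          · exact hjk hc
          · rw [hc] at hsame; nlinarith [mul_self_nonneg k]
        have h2 : (1:ℤ) ≤ |(|j| - |k|)| := Int.one_le_abs (sub_ne_zero.2 h1)
        have habs : (1 : ℝ) ≤ |(|(j:ℝ)| - |(k:ℝ)|)| := by
          calc (1:ℝ) ≤ ((|(|j| - |k|)| : ℤ) : ℝ) := by exact_mod_cast h2
            _ = |(|(j:ℝ)| - |(k:ℝ)|)| := by push_cast; ring
        have heq : |(|(j:ℝ)|/3 - |(k:ℝ)|/3)| = |(|(j:ℝ)| - |(k:ℝ)|)| / 3 := by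
          rw [show |(j:ℝ)|/3 - |(k:ℝ)|/3 = (|(j:ℝ)| - |(k:ℝ)|)/3 by ring, abs_div]
          simp
        rw [heq]; linarith)
    rw [Finset.sum_image hinj] at hkey
    calc ∑ j ∈ t, Φ (|(j : ℝ)| / 3) ≤ (3⁻¹)⁻¹ * ∫ v in Set.Ioi (0 : ℝ), Φ v := hkey
      _ = 3 * ∫ v in Set.Ioi (0 : ℝ), Φ v := by norm_num
  rw [← Finset.sum_filter_add_sum_filter_not (s.filter (fun j => ¬ j = 0))
    (fun j => 0 < j)]
  have hpos := hside ((s.filter (fun j => ¬ j = 0)).filter (fun j => 0 < j))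
    (by intro j hj; simp only [Finset.mem_filter] at hj; exact hj.1.2)
    (by intro j hj k hk; simp only [Finset.mem_filter] at hj hk
        exact mul_pos hj.2 hk.2)
  have hneg := hside ((s.filter (fun j => ¬ j = 0)).filter (fun j => ¬ 0 < j))
    (by intro j hj; simp only [Finset.mem_filter] at hj; exact hj.1.2)
    (by intro j hj k hk; simp only [Finset.mem_filter] at hj hk
        have h1 : j < 0 := by omega
        have h2 : k < 0 := by omega
        exact mul_pos_of_neg_of_neg h1 h2)
  linarith

lemma wavelet_sum_lattice (Φ : ℝ → ℝ)
    (hΦanti : AntitoneOn Φ (Set.Ici (0 : ℝ)))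
    (hΦnonneg : ∀ x ∈ Set.Ici (0 : ℝ), 0 ≤ Φ x)
    (hΦI : IntegrableOn Φ (Set.Ioi (0 : ℝ)))
    (s : Finset ℤ) (r : ℝ) :
    ∑ k ∈ s, Φ |r - (k : ℝ)| ≤ 2 * (Φ 0 + ∫ v in Set.Ioi (0 : ℝ), Φ v) := by
  classical
  have hΦ00 : 0 ≤ Φ 0 := hΦnonneg 0 Set.self_mem_Ici
  have hΦ0max : ∀ y : ℝ, 0 ≤ y → Φ y ≤ Φ 0 :=
    fun y hy => hΦanti Set.self_mem_Ici (Set.mem_Ici.mpr hy) hy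
  have hside : ∀ (t : Finset ℤ) (v : ℤ → ℝ),
      (∀ k ∈ t, v k = |r - (k : ℝ)|) →
      (∀ k ∈ t, 0 ≤ v k) →
      (∀ k ∈ t, ∀ l ∈ t, k ≠ l → 1 ≤ |v k - v l|) →
      ∑ k ∈ t, Φ |r - (k : ℝ)| ≤ Φ 0 + ∫ x in Set.Ioi (0 : ℝ), Φ x := by
    intro t v hveq hv0 hvsep
    rw [← Finset.sum_filter_add_sum_filter_not t (fun k => v k < 1)]
    have hsmall : ∑ k ∈ t.filter (fun k => v k < 1), Φ |r - (k : ℝ)| ≤ Φ 0 := by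
      have hcard : (t.filter (fun k => v k < 1)).card ≤ 1 := by
        rw [Finset.card_le_one]
        intro a ha b hb
        simp only [Finset.mem_filter] at ha hb
        by_contra hab
        have h1 := hvsep a ha.1 b hb.1 hab
        have h0a := hv0 a ha.1
        have h0b := hv0 b hb.1
        have h2 : |v a - v b| < 1 := abs_sub_lt_iff.2 ⟨by linarith [ha.2, hb.2],
          by linarith [ha.2, hb.2]⟩
        linarith
      calc ∑ k ∈ t.filter (fun k => v k < 1), Φ |r - (k : ℝ)|
          ≤ (t.filter (fun k => v k < 1)).card • Φ 0 :=
            Finset.sum_le_card_nsmul _ _ _ (fun k _ => hΦ0max _ (abs_nonneg _))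
        _ = ((t.filter (fun k => v k < 1)).card : ℝ) * Φ 0 := by rw [nsmul_eq_mul]
        _ ≤ 1 * Φ 0 := by
            apply mul_le_mul_of_nonneg_right _ hΦ00
            exact_mod_cast hcard
        _ = Φ 0 := one_mul _
    have hbig : ∑ k ∈ t.filter (fun k => ¬ v k < 1), Φ |r - (k : ℝ)|
        ≤ ∫ x in Set.Ioi (0 : ℝ), Φ x := by
      set t' := t.filter (fun k => ¬ v k < 1) with ht'
      have hmem : ∀ k ∈ t', k ∈ t := fun k hk => (Finset.mem_filter.1 hk).1
      have hinj : ∀ a ∈ t', ∀ b ∈ t', v a = v b → a = b := by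
        intro a ha b hb hab
        by_contra hne
        have := hvsep a (hmem a ha) b (hmem b hb) hne
        rw [hab, sub_self, abs_zero] at this; linarith
      have hkey := wavelet_sum_sep Φ hΦanti hΦnonneg hΦI (t'.image v) 1 one_pos
        (by
          intro x hx
          simp only [Finset.mem_image] at hx
          obtain ⟨k, hk, rfl⟩ := hx
          exact not_lt.1 (Finset.mem_filter.1 hk).2)
        (by
          intro x hx y hy hxy
          simp only [Finset.mem_image] at hx hy
          obtain ⟨k, hk, rfl⟩ := hx
          obtain ⟨l, hl, rfl⟩ := hy
          exact hvsep k (hmem k hk) l (hmem l hl) (fun hh => hxy (by rw [hh])))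
      rw [Finset.sum_image hinj] at hkey
      have heq : ∑ k ∈ t', Φ (v k) = ∑ k ∈ t', Φ |r - (k : ℝ)| := by
        apply Finset.sum_congr rfl
        intro k hk; rw [hveq k (hmem k hk)]
      rw [heq] at hkey
      calc ∑ k ∈ t', Φ |r - (k : ℝ)| ≤ 1⁻¹ * ∫ x in Set.Ioi (0 : ℝ), Φ x := hkey
        _ = ∫ x in Set.Ioi (0 : ℝ), Φ x := by norm_num
    linarith
  rw [← Finset.sum_filter_add_sum_filter_not s (fun k => (k : ℝ) ≤ r)]
  have hL := hside (s.filter (fun k => (k : ℝ) ≤ r)) (fun k => r - (k : ℝ))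
    (by intro k hk
        simp only [Finset.mem_filter] at hk
        show r - (k : ℝ) = |r - (k : ℝ)|
        rw [abs_of_nonneg (show (0:ℝ) ≤ r - (k : ℝ) by linarith [hk.2])])
    (by intro k hk
        simp only [Finset.mem_filter] at hk
        show (0:ℝ) ≤ r - (k : ℝ)
        linarith [hk.2])
    (by intro k hk l hl hkl
        show (1:ℝ) ≤ |r - (k:ℝ) - (r - (l:ℝ))|
        have h2 : (1:ℤ) ≤ |l - k| := Int.one_le_abs (sub_ne_zero.2 (fun hh => hkl (by omega)))
        have heq : r - (k:ℝ) - (r - (l:ℝ)) = (l:ℝ) - (k:ℝ) := by ring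
        rw [heq]
        calc (1:ℝ) ≤ ((|l - k| : ℤ) : ℝ) := by exact_mod_cast h2
          _ = |(l:ℝ) - (k:ℝ)| := by push_cast; ring)
  have hR := hside (s.filter (fun k => ¬ (k : ℝ) ≤ r)) (fun k => (k : ℝ) - r)
    (by intro k hk
        simp only [Finset.mem_filter] at hk
        show (k : ℝ) - r = |r - (k : ℝ)|
        rw [abs_of_nonpos (show r - (k : ℝ) ≤ 0 by push_neg at hk; linarith [hk.2])]
        ring)
    (by intro k hk
        simp only [Finset.mem_filter] at hk
        show (0:ℝ) ≤ (k : ℝ) - r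
        push_neg at hk
        linarith [hk.2])
    (by intro k hk l hl hkl
        show (1:ℝ) ≤ |(k:ℝ) - r - ((l:ℝ) - r)|
        have h2 : (1:ℤ) ≤ |k - l| := Int.one_le_abs (sub_ne_zero.2 (fun hh => hkl (by omega)))
        have heq : (k:ℝ) - r - ((l:ℝ) - r) = (k:ℝ) - (l:ℝ) := by ring
        rw [heq]
        calc (1:ℝ) ≤ ((|k - l| : ℤ) : ℝ) := by exact_mod_cast h2
          _ = |(k:ℝ) - (l:ℝ)| := by push_cast; ring)
  linarith

lemma wavelet_split (Φ : ℝ → ℝ)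
    (hΦanti : AntitoneOn Φ (Set.Ici (0 : ℝ)))
    (hΦnonneg : ∀ x ∈ Set.Ici (0 : ℝ), 0 ≤ Φ x)
    {p q r : ℝ} (hp : 0 ≤ p) (hq : 0 ≤ q) (hr : 0 ≤ r)
    (hor : r ≤ p ∨ r ≤ q) :
    Φ p * Φ q ≤ Φ r * (Φ p + Φ q) := by
  have hpn := hΦnonneg p hp
  have hqn := hΦnonneg q hq
  rcases hor with hc | hc
  · have h1 : Φ p ≤ Φ r := hΦanti hr hp hc
    calc Φ p * Φ q ≤ Φ r * Φ q := mul_le_mul_of_nonneg_right h1 hqn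
      _ ≤ Φ r * (Φ p + Φ q) := by nlinarith [hΦnonneg r hr]
  · have h1 : Φ q ≤ Φ r := hΦanti hr hq hc
    calc Φ p * Φ q ≤ Φ p * Φ r := mul_le_mul_of_nonneg_left h1 hpn
      _ ≤ Φ r * (Φ p + Φ q) := by nlinarith [hΦnonneg r hr]

lemma wavelet_qmp (c : ℝ) :
    Measure.QuasiMeasurePreserving (fun x : ℝ => 2 * x - c) volume volume := by
  have h1 : Measure.QuasiMeasurePreserving (fun x : ℝ => 2 * x) volume volume := by
    refine ⟨(measurable_id.const_mul 2), ?_⟩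
    rw [Real.map_volume_mul_left (two_ne_zero)]
    exact Measure.smul_absolutelyContinuous
  have h2 : Measure.QuasiMeasurePreserving (fun x : ℝ => x - c) volume volume :=
    (measurePreserving_sub_right volume c).quasiMeasurePreserving
  exact h2.comp h1

/-- Explicit pointwise decay estimate for the m-wavelet (key step in the proof of
Lemma 2.1): with `h_k = √2 ∫ φ(u) conj(φ(2u−k)) du`, `λ_k = (−1)^{1−k} conj(h_{1−k})`
and `ψ(x) = √2 Σ_k λ_k φ(2x−k)` (series converging in `L²`), one has a.e.
`|ψ(x)| ≤ 3 (∫ Φ(|u|) du)(D₁+D₂) Φ(|2x−1|/4)` where `D₁ = 2(Φ(0)+∫₀^∞Φ)` and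
`D₂ = Φ(0)+6∫₀^∞Φ`. -/
theorem mother_wavelet_pointwise_decay
    (Φ : ℝ → ℝ)
    (hΦbdd : ∃ M : ℝ, ∀ x ∈ Set.Ici (0 : ℝ), Φ x ≤ M)
    (hΦanti : AntitoneOn Φ (Set.Ici (0 : ℝ)))
    (hΦnonneg : ∀ x ∈ Set.Ici (0 : ℝ), 0 ≤ Φ x)
    (hΦint : Integrable (fun x : ℝ => Φ |x|))
    (φ : ℝ → ℂ) (hφL2 : MemLp φ 2 (volume : Measure ℝ))
    (hφdom : ∀ᵐ x : ℝ, ‖φ x‖ ≤ Φ |x|)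
    (h : ℤ → ℂ)
    (hh : ∀ k : ℤ, h k =
      (Real.sqrt 2 : ℂ) * ∫ u : ℝ, φ u * (starRingEnd ℂ) (φ (2 * u - k)))
    (lam : ℤ → ℂ)
    (hlam : ∀ k : ℤ, lam k = (-1 : ℂ) ^ (1 - k) * (starRingEnd ℂ) (h (1 - k)))
    (ψ : ℝ → ℂ) (hψL2 : MemLp ψ 2 (volume : Measure ℝ))
    (hψser : Tendsto
      (fun s : Finset ℤ =>
        eLpNorm
          (fun x : ℝ => ψ x - (Real.sqrt 2 : ℂ) * ∑ k ∈ s, lam k * φ (2 * x - k)) 2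
          (volume : Measure ℝ))
      atTop (nhds 0)) :
    ∀ᵐ x : ℝ, ‖ψ x‖ ≤
      3 * (∫ u : ℝ, Φ |u|) *
        (2 * (Φ 0 + ∫ v in Set.Ioi (0 : ℝ), Φ v) +
          (Φ 0 + 6 * ∫ v in Set.Ioi (0 : ℝ), Φ v)) * Φ (|2 * x - 1| / 4) := by
  classical
  set I : ℝ := ∫ u : ℝ, Φ |u| with hI
  set J : ℝ := ∫ v in Set.Ioi (0 : ℝ), Φ v with hJ
  have hI0 : 0 ≤ I := integral_nonneg fun u => hΦnonneg _ (Set.mem_Ici.mpr (abs_nonneg u))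
  have habs0 : ∀ y : ℝ, (0:ℝ) ≤ |y| := fun y => abs_nonneg y
  have hΦIOn : IntegrableOn Φ (Set.Ioi (0 : ℝ)) := by
    have h1 : IntegrableOn (fun x : ℝ => Φ |x|) (Set.Ioi (0:ℝ)) := hΦint.integrableOn
    exact h1.congr_fun (fun x hx => by beta_reduce; rw [abs_of_pos hx]) measurableSet_Ioi
  have hcompInt : ∀ j : ℤ, Integrable (fun u : ℝ => Φ |2 * u - (j:ℝ)|) := by
    intro j
    have h1 : Integrable (fun v : ℝ => Φ |v - (j:ℝ)|) := hΦint.comp_sub_right (j:ℝ)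
    exact h1.comp_mul_left' two_ne_zero
  have hcompVal : ∀ j : ℤ, ∫ u : ℝ, Φ |2 * u - (j:ℝ)| = (1/2) * I := by
    intro j
    have h1 : ∫ u : ℝ, Φ |2 * u - (j:ℝ)|
        = |(2:ℝ)⁻¹| • ∫ v : ℝ, Φ |v - (j:ℝ)| :=
      MeasureTheory.Measure.integral_comp_mul_left (fun v => Φ |v - (j:ℝ)|) 2
    rw [h1, integral_sub_right_eq_self (fun v : ℝ => Φ |v|) (j:ℝ), ← hI]
    norm_num
  -- norm bound on h j
  have hsqrtnorm : ‖((Real.sqrt 2 : ℝ) : ℂ)‖ = Real.sqrt 2 := by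
    rw [Complex.norm_real, Real.norm_eq_abs, abs_of_nonneg (Real.sqrt_nonneg 2)]
  have hnormh : ∀ j : ℤ, ‖h j‖ ≤ Real.sqrt 2 * (Φ (|(j:ℝ)| / 3) * (3/2 * I)) := by
    intro j
    rw [hh j, norm_mul, hsqrtnorm]
    apply mul_le_mul_of_nonneg_left _ (Real.sqrt_nonneg 2)
    have hdom2 : ∀ᵐ u : ℝ, ‖φ (2 * u - (j:ℝ))‖ ≤ Φ |2 * u - (j:ℝ)| :=
      (wavelet_qmp (j:ℝ)).ae hφdom
    have hIntg : Integrable (fun u : ℝ => Φ (|(j:ℝ)| / 3) * (Φ |u| + Φ |2 * u - (j:ℝ)|)) :=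
      (hΦint.add (hcompInt j)).const_mul _
    have hbound : ∀ᵐ u : ℝ, ‖φ u * (starRingEnd ℂ) (φ (2 * u - (j:ℝ)))‖
        ≤ Φ (|(j:ℝ)| / 3) * (Φ |u| + Φ |2 * u - (j:ℝ)|) := by
      filter_upwards [hφdom, hdom2] with u h1 h2
      have hq0 : 0 ≤ Φ |u| := hΦnonneg _ (Set.mem_Ici.mpr (abs_nonneg u))
      calc ‖φ u * (starRingEnd ℂ) (φ (2 * u - (j:ℝ)))‖
          = ‖φ u‖ * ‖φ (2 * u - (j:ℝ))‖ := by
            rw [norm_mul, RCLike.norm_conj]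
        _ ≤ Φ |u| * Φ |2 * u - (j:ℝ)| :=
            mul_le_mul h1 h2 (norm_nonneg _) hq0
        _ ≤ Φ (|(j:ℝ)| / 3) * (Φ |u| + Φ |2 * u - (j:ℝ)|) := by
            apply wavelet_split Φ hΦanti hΦnonneg (habs0 u) (habs0 _) (by positivity)
            rcases le_or_gt (|(j:ℝ)| / 3) |u| with hc | hc
            · exact Or.inl hc
            · right
              have h3 := abs_sub_abs_le_abs_sub ((j:ℝ)) (2 * u)
              rw [abs_sub_comm] at h3
              have h4 : |2 * u| = 2 * |u| := by rw [abs_mul]; norm_num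
              linarith
    calc ‖∫ u : ℝ, φ u * (starRingEnd ℂ) (φ (2 * u - (j:ℝ)))‖
        ≤ ∫ u : ℝ, Φ (|(j:ℝ)| / 3) * (Φ |u| + Φ |2 * u - (j:ℝ)|) :=
          norm_integral_le_of_norm_le hIntg hbound
      _ = Φ (|(j:ℝ)| / 3) * (3/2 * I) := by
          rw [integral_const_mul, integral_add hΦint (hcompInt j), ← hI, hcompVal j]
          ring
  have hnormlam : ∀ k : ℤ, ‖lam k‖ = ‖h (1 - k)‖ := by
    intro k
    rw [hlam k]
    simp [norm_zpow]
  -- key finite-sum bound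
  have hmain : ∀ᵐ x : ℝ, ∀ s : Finset ℤ,
      ‖(Real.sqrt 2 : ℂ) * ∑ k ∈ s, lam k * φ (2 * x - k)‖ ≤
        3 * I * (2 * (Φ 0 + J) + (Φ 0 + 6 * J)) * Φ (|2 * x - 1| / 4) := by
    have hdomall : ∀ᵐ x : ℝ, ∀ k : ℤ, ‖φ (2 * x - (k:ℝ))‖ ≤ Φ |2 * x - (k:ℝ)| :=
      ae_all_iff.mpr fun k => (wavelet_qmp (k:ℝ)).ae hφdom
    filter_upwards [hdomall] with x hdx s
    set r : ℝ := |2 * x - 1| / 4 with hr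
    have hr0 : 0 ≤ r := by positivity
    have hΦr0 : 0 ≤ Φ r := hΦnonneg _ (Set.mem_Ici.mpr hr0)
    have step1 : ‖(Real.sqrt 2 : ℂ) * ∑ k ∈ s, lam k * φ (2 * x - k)‖
        ≤ Real.sqrt 2 * ∑ k ∈ s, ‖lam k‖ * ‖φ (2 * x - (k:ℝ))‖ := by
      rw [norm_mul, hsqrtnorm]
      apply mul_le_mul_of_nonneg_left _ (Real.sqrt_nonneg 2)
      refine le_trans (norm_sum_le _ _) (le_of_eq ?_)
      exact Finset.sum_congr rfl fun k _ => norm_mul _ _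
    have step2 : ∑ k ∈ s, ‖lam k‖ * ‖φ (2 * x - (k:ℝ))‖
        ≤ ∑ k ∈ s, Real.sqrt 2 * (Φ (|((1 - k : ℤ):ℝ)| / 3) * (3/2 * I)) * Φ |2 * x - (k:ℝ)| := by
      apply Finset.sum_le_sum
      intro k hk
      have h1 : ‖lam k‖ ≤ Real.sqrt 2 * (Φ (|((1 - k : ℤ):ℝ)| / 3) * (3/2 * I)) := by
        rw [hnormlam k]; exact hnormh (1 - k)
      exact mul_le_mul h1 (hdx k) (norm_nonneg _)
        (mul_nonneg (Real.sqrt_nonneg 2)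
          (mul_nonneg (hΦnonneg _ (Set.mem_Ici.mpr (by positivity))) (by positivity)))
    have step3 : ∑ k ∈ s, Real.sqrt 2 * (Φ (|((1 - k : ℤ):ℝ)| / 3) * (3/2 * I)) * Φ |2 * x - (k:ℝ)|
        = (Real.sqrt 2 * (3/2) * I) * ∑ k ∈ s, Φ (|((1 - k : ℤ):ℝ)| / 3) * Φ |2 * x - (k:ℝ)| := by
      rw [Finset.mul_sum]
      exact Finset.sum_congr rfl fun k _ => by ring
    have step4 : ∑ k ∈ s, Φ (|((1 - k : ℤ):ℝ)| / 3) * Φ |2 * x - (k:ℝ)|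
        ≤ Φ r * ∑ k ∈ s, (Φ (|((1 - k : ℤ):ℝ)| / 3) + Φ |2 * x - (k:ℝ)|) := by
      rw [Finset.mul_sum]
      apply Finset.sum_le_sum
      intro k hk
      apply wavelet_split Φ hΦanti hΦnonneg (by positivity) (habs0 _) hr0
      rcases le_or_gt r (|2 * x - (k:ℝ)|) with hc | hc
      · exact Or.inr hc
      · left
        have h3 := abs_sub_abs_le_abs_sub (2 * x - 1) (2 * x - (k:ℝ))
        have h4 : (2 * x - 1) - (2 * x - (k:ℝ)) = (k:ℝ) - 1 := by ring
        rw [h4] at h3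
        have e2 : |(k:ℝ) - 1| = |1 - (k:ℝ)| := abs_sub_comm _ _
        have h5 : |((1 - k : ℤ):ℝ)| = |1 - (k:ℝ)| := by push_cast; ring_nf
        rw [h5]
        rw [hr] at hc ⊢
        linarith
    have hsum1 : ∑ k ∈ s, Φ (|((1 - k : ℤ):ℝ)| / 3) ≤ Φ 0 + 6 * J := by
      have hinj : ∀ a ∈ s, ∀ b ∈ s, (1 - a : ℤ) = 1 - b → a = b := by
        intro a _ b _ hab; omega
      have := wavelet_sum_third Φ hΦanti hΦnonneg hΦIOn (s.image (fun k : ℤ => 1 - k))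
      rw [Finset.sum_image hinj] at this
      rw [← hJ] at this
      exact this
    have hsum2 : ∑ k ∈ s, Φ |2 * x - (k:ℝ)| ≤ 2 * (Φ 0 + J) := by
      have := wavelet_sum_lattice Φ hΦanti hΦnonneg hΦIOn s (2 * x)
      rw [← hJ] at this
      exact this
    have hsqrt2 : Real.sqrt 2 * Real.sqrt 2 = 2 := Real.mul_self_sqrt (by norm_num)
    calc ‖(Real.sqrt 2 : ℂ) * ∑ k ∈ s, lam k * φ (2 * x - k)‖
        ≤ Real.sqrt 2 * ((Real.sqrt 2 * (3/2) * I) *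
            ∑ k ∈ s, Φ (|((1 - k : ℤ):ℝ)| / 3) * Φ |2 * x - (k:ℝ)|) := by
          refine le_trans step1 ?_
          apply mul_le_mul_of_nonneg_left _ (Real.sqrt_nonneg 2)
          rw [← step3]
          exact step2
      _ ≤ Real.sqrt 2 * ((Real.sqrt 2 * (3/2) * I) *
            (Φ r * ∑ k ∈ s, (Φ (|((1 - k : ℤ):ℝ)| / 3) + Φ |2 * x - (k:ℝ)|))) := by
          apply mul_le_mul_of_nonneg_left _ (Real.sqrt_nonneg 2)
          apply mul_le_mul_of_nonneg_left step4 (by positivity)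
      _ ≤ Real.sqrt 2 * ((Real.sqrt 2 * (3/2) * I) * (Φ r * ((Φ 0 + 6 * J) + 2 * (Φ 0 + J)))) := by
          apply mul_le_mul_of_nonneg_left _ (Real.sqrt_nonneg 2)
          apply mul_le_mul_of_nonneg_left _ (by positivity)
          apply mul_le_mul_of_nonneg_left _ hΦr0
          rw [Finset.sum_add_distrib]
          exact add_le_add hsum1 hsum2
      _ = 3 * I * (2 * (Φ 0 + J) + (Φ 0 + 6 * J)) * Φ r := by
          have : Real.sqrt 2 * (Real.sqrt 2 * (3/2) * I * (Φ r * (Φ 0 + 6 * J + 2 * (Φ 0 + J))))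
              = (Real.sqrt 2 * Real.sqrt 2) * ((3/2) * I * (Φ r * (Φ 0 + 6 * J + 2 * (Φ 0 + J)))) := by
            ring
          rw [this, hsqrt2]
          ring
  -- a.e. convergence along a sequence of finsets
  have aesmk : ∀ k : ℤ, AEStronglyMeasurable (fun x : ℝ => φ (2 * x - (k:ℝ))) volume :=
    fun k => hφL2.aestronglyMeasurable.comp_quasiMeasurePreserving (wavelet_qmp (k:ℝ))
  set F : ℕ → ℝ → ℂ := fun n x =>
    (Real.sqrt 2 : ℂ) * ∑ k ∈ Finset.Icc (-(n:ℤ)) (n:ℤ), lam k * φ (2 * x - k) with hF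
  have hFm : ∀ n, AEStronglyMeasurable (F n) volume := by
    intro n
    apply AEStronglyMeasurable.const_mul
    exact Finset.aestronglyMeasurable_fun_sum _ fun k _ => (aesmk k).const_mul (lam k)
  have hS : Tendsto (fun n : ℕ => Finset.Icc (-(n:ℤ)) (n:ℤ)) atTop atTop := by
    apply tendsto_atTop_finset_of_monotone
    · intro m n hmn
      apply Finset.Icc_subset_Icc
      · simp only [neg_le_neg_iff]; exact_mod_cast hmn
      · exact_mod_cast hmn
    · intro k
      refine ⟨k.natAbs, ?_⟩
      simp only [Finset.mem_Icc]
      omega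
  have htend : Tendsto (fun n => eLpNorm (F n - ψ) 2 volume) atTop (nhds 0) := by
    have h1 := hψser.comp hS
    have h2 : (fun n => eLpNorm (F n - ψ) 2 volume)
        = fun (n : ℕ) => eLpNorm
            (fun x : ℝ => ψ x - (Real.sqrt 2 : ℂ) *
              ∑ k ∈ Finset.Icc (-(n:ℤ)) (n:ℤ), lam k * φ (2 * x - k)) 2 volume := by
      funext (n : ℕ)
      rw [eLpNorm_sub_comm]
      rfl
    rw [h2]
    exact h1
  have hTIM : TendstoInMeasure volume F atTop ψ :=
    tendstoInMeasure_of_tendsto_eLpNorm (p := 2) (by norm_num) hFm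
      hψL2.aestronglyMeasurable htend
  obtain ⟨ns, -, hae⟩ := hTIM.exists_seq_tendsto_ae
  filter_upwards [hae, hmain] with x hx hbx
  have hlim : Tendsto (fun i => ‖F (ns i) x‖) atTop (nhds ‖ψ x‖) := hx.norm
  exact le_of_tendsto hlim (Eventually.of_forall fun i => hbx _)
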